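/- Let E X = 0, E X² = 1. Let M_n = max_{0 ≤ i ≤ n} |S_i| where S_i is the random walk started at y. For the chain Z_n = (S_n^{(2)}, S_n) started at z = (x,y) with x,y ≥ 0, if h satisfies 0 ≤ h(w) ≤ C √(α(w)) with α(x,y) = max(|x|^{1/3}, |y|), then E_z[h²(Z_n)] ≤ C' (1 + α(z)) n^{3/2} for all n ≥ 1 and a constant C' depending only on C and the law of X. -/

import Mathlib

open MeasureTheory ProbabilityTheory

private lemma aux_rpow_third_add {a b : ℝ} (ha : 0 ≤ a) (hb : 0 ≤ b) :
    (a + b) ^ ((1 : ℝ) / 3) ≤ a ^ ((1 : ℝ) / 3) + b ^ ((1 : ℝ) / 3) := by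
  have h := NNReal.rpow_add_le_add_rpow a.toNNReal b.toNNReal
    (by norm_num : (0:ℝ) ≤ 1/3) (by norm_num : (1:ℝ)/3 ≤ 1)
  have h' := NNReal.coe_le_coe.2 h
  simp only [NNReal.coe_rpow, NNReal.coe_add, Real.coe_toNNReal a ha,
    Real.coe_toNNReal b hb] at h'
  exact h'

private lemma aux_rpow_third_le {u : ℝ} (hu : 0 ≤ u) : u ^ ((1 : ℝ) / 3) ≤ 1 + u := by
  rcases le_total u 1 with h | h
  · have : u ^ ((1:ℝ)/3) ≤ 1 := Real.rpow_le_one hu h (by norm_num)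
    linarith
  · have h2 : u ^ ((1:ℝ)/3) ≤ u ^ (1:ℝ) :=
      Real.rpow_le_rpow_of_exponent_le h (by norm_num)
    rw [Real.rpow_one] at h2
    linarith

private lemma aux_abs_le_sq {w s : ℝ} (hs : 0 < s) : |w| ≤ s + w ^ 2 / s := by
  rcases le_total |w| s with h | h
  · have : 0 ≤ w ^ 2 / s := div_nonneg (sq_nonneg w) hs.le
    linarith
  · have h2 : |w| * s ≤ w ^ 2 := by nlinarith [abs_mul_abs_self w, abs_nonneg w]
    have : |w| ≤ w ^ 2 / s := (le_div_iff₀ hs).2 h2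
    linarith

set_option maxHeartbeats 1000000 in
/-- Let `E X = 0`, `E X² = 1` and let `Z_n = (S_n⁽²⁾, S_n)` be the integrated
random walk chain started at `z = (x, y)` with `x, y ≥ 0`.  If `h` satisfies
`0 ≤ h(w) ≤ C √(α(w))` with `α(x,y) = max(|x|^{1/3}, |y|)`, then
`E_z[h²(Z_n)] ≤ C' (1 + α(z)) n^{3/2}` for all `n ≥ 1` and a constant `C'`
depending only on `C` and the law of `X`. -/
theorem second_moment_bound_h
    {Ω : Type*} [MeasurableSpace Ω] (μ : Measure Ω) [IsProbabilityMeasure μ]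
    (X : ℕ → Ω → ℝ) (hXmeas : ∀ i, Measurable (X i))
    (hXindep : iIndepFun X μ)
    (hXident : ∀ i, IdentDistrib (X i) (X 1) μ μ)
    (hint : Integrable (X 1) μ) (hmean : (∫ ω, X 1 ω ∂μ) = 0)
    (hint2 : Integrable (fun ω => (X 1 ω) ^ 2) μ) (hvar : (∫ ω, (X 1 ω) ^ 2 ∂μ) = 1)
    (C : ℝ) (hC : 0 < C) (h : ℝ × ℝ → ℝ)
    (hh : ∀ w : ℝ × ℝ,
      0 ≤ h w ∧ h w ≤ C * Real.sqrt (max (|w.1| ^ ((1 : ℝ) / 3)) |w.2|)) :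
    ∃ C' : ℝ, 0 < C' ∧ ∀ x y : ℝ, 0 ≤ x → 0 ≤ y → ∀ n : ℕ, 1 ≤ n →
      (∫ ω, (h (x + ∑ k ∈ Finset.range n, (y + ∑ i ∈ Finset.range (k + 1), X (i + 1) ω),
                y + ∑ i ∈ Finset.range n, X (i + 1) ω)) ^ 2 ∂μ)
        ≤ C' * (1 + max (|x| ^ ((1 : ℝ) / 3)) |y|) * (n : ℝ) ^ ((3 : ℝ) / 2) := by
  classical
  -- L² membership of the increments
  have hX1L2 : MemLp (X 1) 2 μ :=
    (memLp_two_iff_integrable_sq (hXmeas 1).aestronglyMeasurable).2 hint2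
  have hXL2 : ∀ i, MemLp (X i) 2 μ := fun i => (hXident i).memLp_iff.2 hX1L2
  have hXint : ∀ i, Integrable (X i) μ := fun i => (hXident i).integrable_iff.2 hint
  have hXmean : ∀ i, (∫ ω, X i ω ∂μ) = 0 := fun i => by
    rw [(hXident i).integral_eq]; exact hmean
  have hvarX1 : variance (X 1) μ = 1 := by
    rw [variance_eq_sub hX1L2]
    have h1 : μ[X 1 ^ 2] = ∫ ω, (X 1 ω) ^ 2 ∂μ := by rfl
    have h2 : μ[X 1] = ∫ ω, X 1 ω ∂μ := rfl
    rw [h1, h2, hvar, hmean]; norm_num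
  have hvarX : ∀ i, variance (X i) μ = 1 := fun i => by
    rw [(hXident i).variance_eq]; exact hvarX1
  -- L² membership and second moment of the partial sums
  have hWL2 : ∀ j : ℕ, MemLp (fun ω => ∑ i ∈ Finset.range j, X (i + 1) ω) 2 μ :=
    fun j => memLp_finset_sum (Finset.range j) (fun i _ => hXL2 (i + 1))
  have hWsq_int : ∀ j : ℕ,
      Integrable (fun ω => (∑ i ∈ Finset.range j, X (i + 1) ω) ^ 2) μ :=
    fun j => (hWL2 j).integrable_sq
  have hWvar : ∀ j : ℕ,
      (∫ ω, (∑ i ∈ Finset.range j, X (i + 1) ω) ^ 2 ∂μ) = (j : ℝ) := by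
    intro j
    have hsum : (∑ i ∈ Finset.range j, X (i + 1)) = fun ω => ∑ i ∈ Finset.range j, X (i + 1) ω := by
      funext ω; simp [Finset.sum_apply]
    have hvs : variance (∑ i ∈ Finset.range j, X (i + 1)) μ = (j : ℝ) := by
      rw [IndepFun.variance_sum (fun i _ => hXL2 (i + 1))
        (fun i _ k _ hik => hXindep.indepFun (by omega))]
      simp [hvarX]
    have hmem : MemLp (∑ i ∈ Finset.range j, X (i + 1)) 2 μ := by rw [hsum]; exact hWL2 j
    rw [variance_eq_sub hmem] at hvs
    have hm : μ[∑ i ∈ Finset.range j, X (i + 1)] = 0 := by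
      rw [hsum]
      rw [integral_finset_sum _ (fun i _ => hXint (i + 1))]
      simp [hXmean]
    rw [hm] at hvs
    have hsq : μ[(∑ i ∈ Finset.range j, X (i + 1)) ^ 2]
        = ∫ ω, (∑ i ∈ Finset.range j, X (i + 1) ω) ^ 2 ∂μ := by
      congr 1; funext ω; simp [Finset.sum_apply]
    rw [hsq] at hvs
    linarith [hvs]
  refine ⟨8 * C ^ 2, by positivity, ?_⟩
  intro x y hx hy n hn
  obtain ⟨m, rfl⟩ : ∃ m, n = m + 1 := ⟨n - 1, by omega⟩
  set n := m + 1 with hn_def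
  set N : ℝ := (n : ℝ) with hNdef
  have hN1 : (1 : ℝ) ≤ N := by rw [hNdef]; exact_mod_cast hn
  have hNpos : (0 : ℝ) < N := lt_of_lt_of_le one_pos hN1
  have hsN : (0 : ℝ) < Real.sqrt N := Real.sqrt_pos.2 hNpos
  set a : ℝ := max (|x| ^ ((1 : ℝ) / 3)) |y| with hadef
  have ha0 : (0 : ℝ) ≤ a := le_trans (abs_nonneg y) (le_max_right _ _)
  have hya : y ≤ a := le_trans (le_abs_self y) (le_max_right _ _)
  set c1 : ℝ := C ^ 2 * (2 * a + 1 + N ^ ((1 : ℝ) / 3) * (1 + a) + 2 * N * Real.sqrt N)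
    with hc1def
  set c2 : ℝ := 2 * C ^ 2 / Real.sqrt N with hc2def
  set Q : Ω → ℝ := fun ω => ∑ k ∈ Finset.range n, (∑ i ∈ Finset.range (k + 1), X (i + 1) ω) ^ 2
    with hQdef
  have hQint : Integrable Q μ :=
    integrable_finset_sum _ (fun k _ => hWsq_int (k + 1))
  -- pointwise bound
  have key : ∀ ω,
      (h (x + ∑ k ∈ Finset.range n, (y + ∑ i ∈ Finset.range (k + 1), X (i + 1) ω),
          y + ∑ i ∈ Finset.range n, X (i + 1) ω)) ^ 2 ≤ c1 + c2 * Q ω := by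
    intro ω
    set Z1 : ℝ := x + ∑ k ∈ Finset.range n, (y + ∑ i ∈ Finset.range (k + 1), X (i + 1) ω)
      with hZ1def
    set Z2 : ℝ := y + ∑ i ∈ Finset.range n, X (i + 1) ω with hZ2def
    set u : ℝ := ∑ k ∈ Finset.range n, |∑ i ∈ Finset.range (k + 1), X (i + 1) ω| with hudef
    have hu0 : 0 ≤ u := Finset.sum_nonneg fun k _ => abs_nonneg _
    have hq0 : 0 ≤ Q ω := Finset.sum_nonneg fun k _ => sq_nonneg _
    -- |Z1| ≤ |x| + (N*y + u)
    have hZ1 : |Z1| ≤ |x| + (N * y + u) := by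
      have h1 : |Z1| ≤ |x| + |∑ k ∈ Finset.range n, (y + ∑ i ∈ Finset.range (k + 1), X (i + 1) ω)| :=
        abs_add_le _ _
      have h2 : |∑ k ∈ Finset.range n, (y + ∑ i ∈ Finset.range (k + 1), X (i + 1) ω)|
          ≤ ∑ k ∈ Finset.range n, |y + ∑ i ∈ Finset.range (k + 1), X (i + 1) ω| :=
        Finset.abs_sum_le_sum_abs _ _
      have h3 : ∑ k ∈ Finset.range n, |y + ∑ i ∈ Finset.range (k + 1), X (i + 1) ω|
          ≤ ∑ k ∈ Finset.range n, (y + |∑ i ∈ Finset.range (k + 1), X (i + 1) ω|) := by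
        refine Finset.sum_le_sum fun k _ => ?_
        calc |y + ∑ i ∈ Finset.range (k + 1), X (i + 1) ω|
            ≤ |y| + |∑ i ∈ Finset.range (k + 1), X (i + 1) ω| := abs_add_le _ _
          _ = y + |∑ i ∈ Finset.range (k + 1), X (i + 1) ω| := by rw [abs_of_nonneg hy]
      have h4 : ∑ k ∈ Finset.range n, (y + |∑ i ∈ Finset.range (k + 1), X (i + 1) ω|)
          = N * y + u := by
        rw [Finset.sum_add_distrib, Finset.sum_const, Finset.card_range,
          nsmul_eq_mul]
      linarith
    -- |Z2| ≤ y + u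
    have hZ2 : |Z2| ≤ y + u := by
      have h1 : |Z2| ≤ |y| + |∑ i ∈ Finset.range n, X (i + 1) ω| := abs_add_le _ _
      have h2 : |∑ i ∈ Finset.range n, X (i + 1) ω| ≤ u := by
        have hm : m ∈ Finset.range n := by simp [hn_def]
        have := Finset.single_le_sum
          (f := fun k => |∑ i ∈ Finset.range (k + 1), X (i + 1) ω|)
          (fun k _ => abs_nonneg _) hm
        simpa [hn_def] using this
      rw [abs_of_nonneg hy] at h1
      linarith
    -- u ≤ N √N + Q/√N
    have hu : u ≤ N * Real.sqrt N + Q ω / Real.sqrt N := by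
      have h1 : u ≤ ∑ k ∈ Finset.range n,
          (Real.sqrt N + (∑ i ∈ Finset.range (k + 1), X (i + 1) ω) ^ 2 / Real.sqrt N) :=
        Finset.sum_le_sum fun k _ => aux_abs_le_sq hsN
      have h2 : ∑ k ∈ Finset.range n,
          (Real.sqrt N + (∑ i ∈ Finset.range (k + 1), X (i + 1) ω) ^ 2 / Real.sqrt N)
          = N * Real.sqrt N + Q ω / Real.sqrt N := by
        rw [Finset.sum_add_distrib, Finset.sum_const, Finset.card_range, nsmul_eq_mul,
          ← Finset.sum_div]
      linarith
    -- bound on alpha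
    have hrpow3 : (0:ℝ) ≤ N ^ ((1:ℝ)/3) := Real.rpow_nonneg hNpos.le _
    have halpha : max (|Z1| ^ ((1 : ℝ) / 3)) |Z2|
        ≤ 2 * a + 1 + N ^ ((1 : ℝ) / 3) * (1 + a) + 2 * u := by
      refine max_le ?_ ?_
      · have h1 : |Z1| ^ ((1:ℝ)/3) ≤ (|x| + (N * y + u)) ^ ((1:ℝ)/3) :=
          Real.rpow_le_rpow (abs_nonneg _) hZ1 (by norm_num)
        have h2 : (|x| + (N * y + u)) ^ ((1:ℝ)/3)
            ≤ |x| ^ ((1:ℝ)/3) + (N * y + u) ^ ((1:ℝ)/3) :=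
          aux_rpow_third_add (abs_nonneg x)
            (by positivity)
        have h3 : (N * y + u) ^ ((1:ℝ)/3) ≤ (N * y) ^ ((1:ℝ)/3) + u ^ ((1:ℝ)/3) :=
          aux_rpow_third_add (by positivity) hu0
        have h4 : (N * y) ^ ((1:ℝ)/3) = N ^ ((1:ℝ)/3) * y ^ ((1:ℝ)/3) :=
          Real.mul_rpow hNpos.le hy
        have h5 : y ^ ((1:ℝ)/3) ≤ 1 + a := le_trans (aux_rpow_third_le hy) (by linarith)
        have h6 : N ^ ((1:ℝ)/3) * y ^ ((1:ℝ)/3) ≤ N ^ ((1:ℝ)/3) * (1 + a) :=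
          mul_le_mul_of_nonneg_left h5 hrpow3
        have h7 : u ^ ((1:ℝ)/3) ≤ 1 + u := aux_rpow_third_le hu0
        have h8 : |x| ^ ((1:ℝ)/3) ≤ a := le_max_left _ _
        linarith
      · linarith [mul_nonneg hrpow3 (by linarith : (0:ℝ) ≤ 1 + a)]
    -- h² ≤ C² α
    set α : ℝ := max (|Z1| ^ ((1 : ℝ) / 3)) |Z2| with halphadef
    have hα0 : 0 ≤ α := le_trans (abs_nonneg Z2) (le_max_right _ _)
    have hsq : (h (Z1, Z2)) ^ 2 ≤ C ^ 2 * α := by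
      have h1 := (hh (Z1, Z2)).1
      have h2 := (hh (Z1, Z2)).2
      have h3 : (h (Z1, Z2)) ^ 2 ≤ (C * Real.sqrt α) ^ 2 := by
        apply pow_le_pow_left₀ h1
        exact h2
      rw [mul_pow, Real.sq_sqrt hα0] at h3
      exact h3
    have hfinal : C ^ 2 * α ≤ c1 + c2 * Q ω := by
      have hstep : α ≤ 2 * a + 1 + N ^ ((1:ℝ)/3) * (1 + a)
          + 2 * (N * Real.sqrt N + Q ω / Real.sqrt N) := by
        calc α ≤ 2 * a + 1 + N ^ ((1:ℝ)/3) * (1 + a) + 2 * u := halpha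
          _ ≤ _ := by linarith
      have := mul_le_mul_of_nonneg_left hstep (sq_nonneg C)
      calc C ^ 2 * α ≤ C ^ 2 * (2 * a + 1 + N ^ ((1:ℝ)/3) * (1 + a)
          + 2 * (N * Real.sqrt N + Q ω / Real.sqrt N)) := this
        _ = c1 + c2 * Q ω := by rw [hc1def, hc2def]; ring
    exact le_trans hsq hfinal
  -- integrate
  have hgint : Integrable (fun ω => c1 + c2 * Q ω) μ :=
    (integrable_const c1).add (hQint.const_mul c2)
  have hIle : (∫ ω, (h (x + ∑ k ∈ Finset.range n, (y + ∑ i ∈ Finset.range (k + 1), X (i + 1) ω),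
          y + ∑ i ∈ Finset.range n, X (i + 1) ω)) ^ 2 ∂μ) ≤ ∫ ω, (c1 + c2 * Q ω) ∂μ :=
    integral_mono_of_nonneg (Filter.Eventually.of_forall fun ω => sq_nonneg _)
      hgint (Filter.Eventually.of_forall key)
  have hIg : (∫ ω, (c1 + c2 * Q ω) ∂μ) = c1 + c2 * (∫ ω, Q ω ∂μ) := by
    rw [integral_add (integrable_const c1) (hQint.const_mul c2), integral_const,
      integral_const_mul]
    simp
  have hQval : (∫ ω, Q ω ∂μ) = ∑ k ∈ Finset.range n, ((k + 1 : ℕ) : ℝ) := by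
    rw [hQdef]
    rw [integral_finset_sum _ (fun k _ => hWsq_int (k + 1))]
    exact Finset.sum_congr rfl fun k _ => hWvar (k + 1)
  have hQle : (∫ ω, Q ω ∂μ) ≤ N ^ 2 := by
    rw [hQval]
    have h1 : ∀ k ∈ Finset.range n, ((k + 1 : ℕ) : ℝ) ≤ N := by
      intro k hk
      have : k + 1 ≤ n := Finset.mem_range.1 hk
      rw [hNdef]; exact_mod_cast this
    calc ∑ k ∈ Finset.range n, ((k + 1 : ℕ) : ℝ) ≤ ∑ k ∈ Finset.range n, N :=
        Finset.sum_le_sum h1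
      _ = N * N := by rw [Finset.sum_const, Finset.card_range, nsmul_eq_mul]
      _ = N ^ 2 := by ring
  have hc2nn : 0 ≤ c2 := by rw [hc2def]; positivity
  have hmain : c1 + c2 * (∫ ω, Q ω ∂μ) ≤ 8 * C ^ 2 * (1 + a) * N ^ ((3 : ℝ) / 2) := by
    have hc2Q : c2 * (∫ ω, Q ω ∂μ) ≤ 2 * C ^ 2 * (N * Real.sqrt N) := by
      have h1 : c2 * (∫ ω, Q ω ∂μ) ≤ c2 * N ^ 2 := mul_le_mul_of_nonneg_left hQle hc2nn
      have h2 : c2 * N ^ 2 = 2 * C ^ 2 * (N * Real.sqrt N) := by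
        rw [hc2def, show 2 * C ^ 2 / Real.sqrt N * N ^ 2
          = 2 * C ^ 2 * (N * (N / Real.sqrt N)) by ring, Real.div_sqrt]
      linarith
    set P : ℝ := N ^ ((3 : ℝ) / 2) with hPdef
    have hNP : N * Real.sqrt N = P := by
      rw [hPdef, Real.sqrt_eq_rpow, show (3:ℝ)/2 = 1 + 1/2 by norm_num,
        Real.rpow_add hNpos, Real.rpow_one]
    have hP1 : (1 : ℝ) ≤ P := by
      rw [hPdef]
      calc (1:ℝ) = N ^ (0:ℝ) := by rw [Real.rpow_zero]
        _ ≤ N ^ ((3:ℝ)/2) := Real.rpow_le_rpow_of_exponent_le hN1 (by norm_num)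
    have hT : N ^ ((1:ℝ)/3) ≤ P := by
      rw [hPdef]; exact Real.rpow_le_rpow_of_exponent_le hN1 (by norm_num)
    have hT0 : (0:ℝ) ≤ N ^ ((1:ℝ)/3) := Real.rpow_nonneg hNpos.le _
    have hinner : 2 * a + 1 + N ^ ((1:ℝ)/3) * (1 + a) + 2 * (N * Real.sqrt N)
        + 2 * (N * Real.sqrt N) ≤ 8 * (1 + a) * P := by
      rw [hNP]
      nlinarith [mul_le_mul_of_nonneg_right hT (by linarith : (0:ℝ) ≤ 1 + a),
        mul_nonneg (sub_nonneg.2 hP1) ha0]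
    calc c1 + c2 * (∫ ω, Q ω ∂μ) ≤ c1 + 2 * C ^ 2 * (N * Real.sqrt N) := by linarith
      _ = C ^ 2 * (2 * a + 1 + N ^ ((1:ℝ)/3) * (1 + a) + 2 * (N * Real.sqrt N)
          + 2 * (N * Real.sqrt N)) := by rw [hc1def]; ring
      _ ≤ C ^ 2 * (8 * (1 + a) * P) := mul_le_mul_of_nonneg_left hinner (sq_nonneg C)
      _ = 8 * C ^ 2 * (1 + a) * P := by ring
  calc (∫ ω, (h (x + ∑ k ∈ Finset.range n, (y + ∑ i ∈ Finset.range (k + 1), X (i + 1) ω),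
          y + ∑ i ∈ Finset.range n, X (i + 1) ω)) ^ 2 ∂μ)
      ≤ ∫ ω, (c1 + c2 * Q ω) ∂μ := hIle
    _ = c1 + c2 * (∫ ω, Q ω ∂μ) := hIg
    _ ≤ 8 * C ^ 2 * (1 + a) * N ^ ((3 : ℝ) / 2) := hmain
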